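/- With three panel periods t ∈ {0,1,2} and treatment D i t = [G i ∧ t = 2], the two-way fixed effects coefficient β̂ (minimizing Σ_i Σ_{t=0}^{2} (Y i t − α i − δ t − β D i t)²) equals (1/2)·τ̂_DID + (1/2)·τ̂_DID(2,0), where τ̂_DID = (1/n₁)Σ_{G i}(Y i 2 − Y i 1) − (1/n₀)Σ_{¬G i}(Y i 2 − Y i 1) and τ̂_DID(2,0) = (1/n₁)Σ_{G i}(Y i 2 − Y i 0) − (1/n₀)Σ_{¬G i}(Y i 2 − Y i 0). -/

import Mathlib

open Finset

/-- Two-way demeaning of a panel variable. -/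
noncomputable def twoWayDemean (n T : ℕ) (X : Fin n → Fin T → ℝ) : Fin n → Fin T → ℝ :=
  fun i t => X i t - (∑ s, X i s) / T - (∑ j, X j t) / n + (∑ j, ∑ s, X j s) / (T * n)

set_option maxHeartbeats 1000000

/-- With three panel periods and D i t = [G i ∧ t = 2], the two-way
fixed effects coefficient (via the demeaned least-squares formula) equals the equally
weighted average of the two DID estimators τ̂_DID and τ̂_DID(2,0). -/
theorem twoway_fe_eq_extended_did
    (n : ℕ) (Y : Fin n → Fin 3 → ℝ) (G : Fin n → Bool)
    (n1 n0 : ℕ)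
    (hn1 : n1 = (univ.filter (fun i => G i = true)).card)
    (hn0 : n0 = (univ.filter (fun i => G i = false)).card)
    (hn1pos : 0 < n1) (hn0pos : 0 < n0)
    (D : Fin n → Fin 3 → ℝ)
    (hD : ∀ i t, D i t = if G i = true ∧ t = 2 then (1:ℝ) else 0)
    (βhat : ℝ)
    (hβ : βhat = (∑ i, ∑ t, twoWayDemean n 3 D i t * twoWayDemean n 3 Y i t)
                  / (∑ i, ∑ t, (twoWayDemean n 3 D i t)^2)) :
    βhat = (1/2) * ((1 / (n1:ℝ)) * ∑ i ∈ univ.filter (fun i => G i = true), (Y i 2 - Y i 1)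
                    - (1 / (n0:ℝ)) * ∑ i ∈ univ.filter (fun i => G i = false), (Y i 2 - Y i 1))
         + (1/2) * ((1 / (n1:ℝ)) * ∑ i ∈ univ.filter (fun i => G i = true), (Y i 2 - Y i 0)
                    - (1 / (n0:ℝ)) * ∑ i ∈ univ.filter (fun i => G i = false), (Y i 2 - Y i 0)) := by
  classical
  have h0 : (((0:Fin 3)) = (2:Fin 3)) = False := by decide
  have h1 : (((1:Fin 3)) = (2:Fin 3)) = False := by decide
  have h2 : (((2:Fin 3)) = (2:Fin 3)) = True := by decide
  have hsum1 : ∑ j, (if G j = true then (1:ℝ) else 0) = (n1:ℝ) := by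
    rw [Finset.sum_boole, hn1]
  have hfact : ∀ i t, twoWayDemean n 3 D i t =
      ((if G i = true then (1:ℝ) else 0) - (n1:ℝ)/(n:ℝ)) *
      ((if t = (2:Fin 3) then (1:ℝ) else 0) - 1/3) := by
    intro i t
    simp only [twoWayDemean, hD]
    rw [Fin.sum_univ_three]
    have hcol : ∀ s : Fin 3, (∑ j, if G j = true ∧ s = 2 then (1:ℝ) else 0)
        = if s = 2 then (n1:ℝ) else 0 := by
      intro s
      by_cases hs : s = 2
      · simp [hs, hsum1]
      · simp [hs]
    have hgrand : (∑ j, ∑ s : Fin 3, if G j = true ∧ s = 2 then (1:ℝ) else 0) = (n1:ℝ) := by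
      rw [Finset.sum_comm]
      rw [Finset.sum_congr rfl (fun s _ => hcol s)]
      rw [Fin.sum_univ_three]
      simp [h0,h1,h2]
    rw [hgrand, hcol t]
    simp only [h0, h1, h2, true_and, false_and, if_true, if_false, if_neg, and_true]
    by_cases hg : G i = true <;> by_cases ht : t = 2 <;> simp [hg, ht] <;> ring
  set T1 : Finset (Fin n) := univ.filter (fun i => G i = true) with hT1
  set T0 : Finset (Fin n) := univ.filter (fun i => G i = false) with hT0
  have hfilter : univ.filter (fun i => ¬ G i = true) = T0 := by
    rw [hT0]; apply Finset.filter_congr; intro i _; simp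
  set A0 := ∑ i ∈ T1, Y i 0 with hA0
  set A1 := ∑ i ∈ T1, Y i 1 with hA1
  set A2 := ∑ i ∈ T1, Y i 2 with hA2
  set B0 := ∑ i ∈ T0, Y i 0 with hB0
  set B1 := ∑ i ∈ T0, Y i 1 with hB1
  set B2 := ∑ i ∈ T0, Y i 2 with hB2
  have hS : ∀ t : Fin 3, (∑ j, Y j t) = (∑ i ∈ T1, Y i t) + (∑ i ∈ T0, Y i t) := by
    intro t
    rw [← Finset.sum_filter_add_sum_filter_not univ (fun i => G i = true), hfilter]
  have hS0 : (∑ j, Y j 0) = A0 + B0 := hS 0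
  have hS1 : (∑ j, Y j 1) = A1 + B1 := hS 1
  have hS2 : (∑ j, Y j 2) = A2 + B2 := hS 2
  have hGM : (∑ j, (Y j 0 + Y j 1 + Y j 2)) = (A0+B0) + (A1+B1) + (A2+B2) := by
    rw [Finset.sum_add_distrib, Finset.sum_add_distrib, hS0, hS1, hS2]
  set p : ℝ := (n1:ℝ)/(n:ℝ) with hp
  set d : ℝ := ((A0+B0) + (A1+B1) - 2*(A2+B2))/(3*(n:ℝ)) with hd
  -- pointwise numerator
  have hNpt : ∀ i, (∑ t, twoWayDemean n 3 D i t * twoWayDemean n 3 Y i t)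
      = ((if G i = true then (1:ℝ) else 0) - p) *
        ((-1/3)*Y i 0 + (-1/3)*Y i 1 + (2/3)*Y i 2 + d) := by
    intro i
    rw [Fin.sum_univ_three, hfact i 0, hfact i 1, hfact i 2]
    simp only [twoWayDemean, Fin.sum_univ_three, h0, h1, h2, if_true, if_false]
    rw [hGM, hS0, hS1, hS2, hd]
    ring
  have hDpt : ∀ i, (∑ t, (twoWayDemean n 3 D i t)^2)
      = ((if G i = true then (1:ℝ) else 0) - p)^2 * (2/3) := by
    intro i
    rw [Fin.sum_univ_three, hfact i 0, hfact i 1, hfact i 2]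
    simp only [h0, h1, h2, if_true, if_false]
    ring
  have hsplit : ∀ (q a b c e : ℝ) (S : Finset (Fin n)),
      (∑ i ∈ S, q * (a*Y i 0 + b*Y i 1 + c*Y i 2 + e))
      = q * (a * (∑ i ∈ S, Y i 0) + b * (∑ i ∈ S, Y i 1) + c * (∑ i ∈ S, Y i 2)
             + e * (S.card : ℝ)) := by
    intro q a b c e S
    rw [Finset.sum_congr rfl (fun i _ => show q*(a*Y i 0 + b*Y i 1 + c*Y i 2 + e)
        = q*a*Y i 0 + q*b*Y i 1 + q*c*Y i 2 + q*e by ring)]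
    simp only [Finset.sum_add_distrib, ← Finset.mul_sum, Finset.sum_const, nsmul_eq_mul]
    ring
  have e1 : ∀ i ∈ T1, ((if G i = true then (1:ℝ) else 0) - p) *
        ((-1/3)*Y i 0 + (-1/3)*Y i 1 + (2/3)*Y i 2 + d)
      = (1 - p) * ((-1/3)*Y i 0 + (-1/3)*Y i 1 + (2/3)*Y i 2 + d) := by
    intro i hi
    rw [if_pos (Finset.mem_filter.mp hi).2]
  have e0 : ∀ i ∈ T0, ((if G i = true then (1:ℝ) else 0) - p) *
        ((-1/3)*Y i 0 + (-1/3)*Y i 1 + (2/3)*Y i 2 + d)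
      = (0 - p) * ((-1/3)*Y i 0 + (-1/3)*Y i 1 + (2/3)*Y i 2 + d) := by
    intro i hi
    rw [if_neg (by simp [(Finset.mem_filter.mp hi).2])]
  have hN : (∑ i, ∑ t, twoWayDemean n 3 D i t * twoWayDemean n 3 Y i t)
      = (1 - p) * ((-1/3)*A0 + (-1/3)*A1 + (2/3)*A2 + d*(n1:ℝ))
        + (0 - p) * ((-1/3)*B0 + (-1/3)*B1 + (2/3)*B2 + d*(n0:ℝ)) := by
    rw [Finset.sum_congr rfl (fun i _ => hNpt i),
        ← Finset.sum_filter_add_sum_filter_not univ (fun i => G i = true), hfilter, ← hT1,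
        Finset.sum_congr rfl e1, Finset.sum_congr rfl e0, hsplit, hsplit,
        ← hA0, ← hA1, ← hA2, ← hB0, ← hB1, ← hB2, ← hn1, ← hn0]
  have e1' : ∀ i ∈ T1, ((if G i = true then (1:ℝ) else 0) - p)^2 * (2/3)
      = ((1:ℝ) - p)^2 * (2/3) := by
    intro i hi
    rw [if_pos (Finset.mem_filter.mp hi).2]
  have e0' : ∀ i ∈ T0, ((if G i = true then (1:ℝ) else 0) - p)^2 * (2/3)
      = ((0:ℝ) - p)^2 * (2/3) := by
    intro i hi
    rw [if_neg (by simp [(Finset.mem_filter.mp hi).2])]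
  have hDen : (∑ i, ∑ t, (twoWayDemean n 3 D i t)^2)
      = (1-p)^2 * (2/3) * (n1:ℝ) + (0-p)^2 * (2/3) * (n0:ℝ) := by
    rw [Finset.sum_congr rfl (fun i _ => hDpt i),
        ← Finset.sum_filter_add_sum_filter_not univ (fun i => G i = true), hfilter, ← hT1,
        Finset.sum_congr rfl e1', Finset.sum_congr rfl e0',
        Finset.sum_const, Finset.sum_const, nsmul_eq_mul, nsmul_eq_mul, ← hn1, ← hn0]
    ring
  have hncard : (n:ℝ) = (n1:ℝ) + (n0:ℝ) := by
    have hc := Finset.card_filter_add_card_filter_not (s := (univ : Finset (Fin n)))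
      (p := fun i => G i = true)
    rw [Finset.card_univ, Fintype.card_fin, hfilter] at hc
    rw [← hc, ← hT1, ← hn1, ← hn0]
    push_cast; ring
  have hn1r : (n1:ℝ) ≠ 0 := Nat.cast_ne_zero.mpr hn1pos.ne'
  have hn0r : (n0:ℝ) ≠ 0 := Nat.cast_ne_zero.mpr hn0pos.ne'
  have hR1 : (∑ i ∈ T1, (Y i 2 - Y i 1)) = A2 - A1 := by rw [Finset.sum_sub_distrib]
  have hR2 : (∑ i ∈ T0, (Y i 2 - Y i 1)) = B2 - B1 := by rw [Finset.sum_sub_distrib]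
  have hR3 : (∑ i ∈ T1, (Y i 2 - Y i 0)) = A2 - A0 := by rw [Finset.sum_sub_distrib]
  have hR4 : (∑ i ∈ T0, (Y i 2 - Y i 0)) = B2 - B0 := by rw [Finset.sum_sub_distrib]
  rw [hβ, hN, hDen, hR1, hR2, hR3, hR4, hd, hp, hncard]
  have hden2 : ((1:ℝ) - (n1:ℝ)/((n1:ℝ)+(n0:ℝ)))^2 * (2/3) * (n1:ℝ)
      + ((0:ℝ) - (n1:ℝ)/((n1:ℝ)+(n0:ℝ)))^2 * (2/3) * (n0:ℝ) ≠ 0 := by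
    have hpos : (0:ℝ) < (n1:ℝ) + (n0:ℝ) := by positivity
    have : ((1:ℝ) - (n1:ℝ)/((n1:ℝ)+(n0:ℝ))) = (n0:ℝ)/((n1:ℝ)+(n0:ℝ)) := by
      field_simp
      ring
    rw [this]
    positivity
  rw [div_eq_iff hden2]
  field_simp
  ring
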